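/- Let Δt > 0 and let θ : [0, Δt] → ℝ be a C² function with θ''(t) < 0 for all t, θ(0) = 0, θ(Δt) = θ_q where 0 ≤ θ_q ≤ π/3, and θ(t) ∈ [0, θ_q] for all t ∈ [0, Δt]. Let x(t) = ∫₀ᵗ cos θ(s) ds and y(t) = ∫₀ᵗ sin θ(s) ds be the associated unit-speed planar curve. Then for every t ∈ [0, Δt), y(t) < y(Δt) + tan(θ_q − π/6)·(x(t) − x(Δt)); i.e., the line through the endpoint (x(Δt), y(Δt)) at angle θ_q − π/6 above the horizontal (π/6 clockwise from the curve's final tangent) passes strictly above the rest of the curve. -/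

import Mathlib

open Real Set intervalIntegral

set_option maxHeartbeats 1000000 in
/-- For a C² angle function `θ` on `[0, Δt]` with `θ'' < 0`,
`θ(0) = 0`, `θ(Δt) = θ_q ∈ [0, π/3]` and `θ` taking values in `[0, θ_q]`, the
line through the endpoint of the associated unit-speed curve at angle
`θ_q - π/6` above the horizontal passes strictly above the rest of the curve. -/
theorem line_above_concave_curve
    (Δt θq : ℝ) (hΔt : 0 < Δt) (θ θ' θ'' : ℝ → ℝ)
    (hd1 : ∀ t ∈ Set.Icc 0 Δt, HasDerivWithinAt θ (θ' t) (Set.Icc 0 Δt) t)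
    (hd2 : ∀ t ∈ Set.Icc 0 Δt, HasDerivWithinAt θ' (θ'' t) (Set.Icc 0 Δt) t)
    (hcont : ContinuousOn θ'' (Set.Icc 0 Δt))
    (hconc : ∀ t ∈ Set.Icc 0 Δt, θ'' t < 0)
    (h0 : θ 0 = 0) (hq : θ Δt = θq) (hθq : 0 ≤ θq ∧ θq ≤ π / 3)
    (hrange : ∀ t ∈ Set.Icc 0 Δt, θ t ∈ Set.Icc 0 θq)
    (x y : ℝ → ℝ)
    (hx : ∀ t, x t = ∫ s in (0 : ℝ)..t, Real.cos (θ s))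
    (hy : ∀ t, y t = ∫ s in (0 : ℝ)..t, Real.sin (θ s)) :
    ∀ t ∈ Set.Ico 0 Δt,
      y t < y Δt + Real.tan (θq - π / 6) * (x t - x Δt) := by
  obtain ⟨hθq0, hθq3⟩ := hθq
  have hπ : (0:ℝ) < π := Real.pi_pos
  have hθc : ContinuousOn θ (Set.Icc 0 Δt) := fun s hs => (hd1 s hs).continuousWithinAt
  -- strict concavity
  have hconc' : StrictConcaveOn ℝ (Set.Icc 0 Δt) θ := by
    apply strictConcaveOn_of_deriv2_neg (convex_Icc _ _) hθc
    intro s hs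
    rw [interior_Icc] at hs
    have h1 : ∀ u ∈ Set.Ioo (0:ℝ) Δt, deriv θ u = θ' u := fun u hu =>
      ((hd1 u (Ioo_subset_Icc_self hu)).hasDerivAt (Icc_mem_nhds hu.1 hu.2)).deriv
    have h2 : deriv θ =ᶠ[nhds s] θ' := by
      filter_upwards [Ioo_mem_nhds hs.1 hs.2] with u hu using h1 u hu
    have : deriv^[2] θ s = deriv θ' s := by
      simp only [Function.iterate_succ, Function.iterate_zero, Function.comp_apply, id]
      exact Filter.EventuallyEq.deriv_eq h2
    rw [this, ((hd2 s (Ioo_subset_Icc_self hs)).hasDerivAt (Icc_mem_nhds hs.1 hs.2)).deriv]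
    exact hconc s (Ioo_subset_Icc_self hs)
  -- θ t < θq for t < Δt
  have hlt : ∀ t ∈ Set.Ico (0:ℝ) Δt, θ t < θq := by
    intro t ht
    rcases lt_or_ge (θ t) θq with h | h
    · exact h
    exfalso
    have htq : θ t = θq := le_antisymm ((hrange t ⟨ht.1, ht.2.le⟩).2) h
    have hm : (1/2 : ℝ) • t + (1/2 : ℝ) • Δt ∈ Set.Icc (0:ℝ) Δt := by
      simp only [smul_eq_mul]
      constructor <;> linarith [ht.1, ht.2]
    have := hconc'.2 ⟨ht.1, ht.2.le⟩ (⟨hΔt.le, le_refl _⟩ : Δt ∈ Set.Icc (0:ℝ) Δt)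
      (ne_of_lt ht.2) (by norm_num : (0:ℝ) < 1/2) (by norm_num : (0:ℝ) < 1/2) (by norm_num)
    rw [htq, hq] at this
    have hmem := (hrange _ hm).2
    simp only [smul_eq_mul] at this hmem
    linarith
  intro t ht
  -- setup
  set φ : ℝ := θq - π/6 with hφ
  have hθt0 : 0 ≤ θ t := (hrange t ⟨ht.1, ht.2.le⟩).1
  have hθtq : θ t < θq := hlt t ht
  set c : ℝ := θq - θ t with hc
  set L : ℝ := Δt - t with hL
  have hcpos : 0 < c := sub_pos.2 hθtq
  have hLpos : 0 < L := sub_pos.2 ht.2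
  set k : ℝ := c / L with hk
  have hkpos : 0 < k := div_pos hcpos hLpos
  set ℓ : ℝ → ℝ := fun s => θ t + (s - t) * k with hℓ
  -- chord inequality
  have hchord : ∀ s ∈ Set.Ioo t Δt, ℓ s < θ s := by
    intro s hs
    have ha : (0:ℝ) < (Δt - s) / L := div_pos (sub_pos.2 hs.2) hLpos
    have hb : (0:ℝ) < (s - t) / L := div_pos (sub_pos.2 hs.1) hLpos
    have hab : (Δt - s)/L + (s - t)/L = 1 := by field_simp; ring
    have := hconc'.2 (⟨ht.1, ht.2.le⟩ : t ∈ Set.Icc (0:ℝ) Δt)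
      (⟨hΔt.le, le_refl _⟩ : Δt ∈ Set.Icc (0:ℝ) Δt) (ne_of_lt ht.2) ha hb hab
    simp only [smul_eq_mul] at this
    have hcomb : (Δt - s)/L * t + (s - t)/L * Δt = s := by field_simp; ring
    rw [hcomb, hq] at this
    have : (Δt - s)/L * θ t + (s - t)/L * θq < θ s := this
    have hexp : ℓ s = (Δt - s)/L * θ t + (s - t)/L * θq := by
      simp only [hℓ, hk, hc]; field_simp; ring
    linarith [hexp ▸ this]
  have hℓle : ∀ s ∈ Set.Icc t Δt, ℓ s ≤ θ s := by
    intro s hs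
    rcases eq_or_lt_of_le hs.1 with h | h
    · simp [hℓ, ← h]
    rcases eq_or_lt_of_le hs.2 with h' | h'
    · have : ℓ Δt = θq := by simp only [hℓ, hk, hc]; field_simp; rw [hL]; ring
      rw [h', this, hq]
    · exact (hchord s ⟨h, h'⟩).le
  -- bounds on arguments
  have hℓmem : ∀ s ∈ Set.Icc t Δt, ℓ s ∈ Set.Icc (0:ℝ) θq := by
    intro s hs
    constructor
    · have : 0 ≤ (s - t) * k := mul_nonneg (sub_nonneg.2 hs.1) hkpos.le
      simp only [hℓ]; linarith
    · have h1 : (s - t) * k ≤ (Δt - t) * k := by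
        apply mul_le_mul_of_nonneg_right (by linarith [hs.2]) hkpos.le
      have h2 : (Δt - t) * k = θq - θ t := by rw [hk, hc]; field_simp; rw [hL]; ring
      simp only [hℓ]; linarith
  have harg : ∀ u : ℝ, u ∈ Set.Icc (0:ℝ) θq → u - φ ∈ Set.Icc (-(π/2)) (π/2) := by
    intro u hu
    constructor <;> [skip; skip] <;> simp only [hφ] <;>
      nlinarith [hu.1, hu.2, hπ]
  -- integrand comparison
  set f : ℝ → ℝ := fun s => Real.sin (θ s - φ) with hf
  set g : ℝ → ℝ := fun s => Real.sin (ℓ s - φ) with hg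
  have hsub : Set.Icc t Δt ⊆ Set.Icc 0 Δt := Icc_subset_Icc ht.1 le_rfl
  have hfc : ContinuousOn f (Set.Icc t Δt) :=
    Real.continuous_sin.comp_continuousOn ((hθc.mono hsub).sub continuousOn_const)
  have hgc : ContinuousOn g (Set.Icc t Δt) := by
    apply Real.continuous_sin.comp_continuousOn
    fun_prop
  have hgle : ∀ s ∈ Set.Icc t Δt, g s ≤ f s := by
    intro s hs
    have h1 := harg _ (hℓmem s hs)
    have h2 := harg _ (hrange s (hsub hs))
    exact Real.strictMonoOn_sin.monotoneOn h1 h2 (by linarith [hℓle s hs])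
  have hm : (t + Δt)/2 ∈ Set.Ioo t Δt := ⟨by linarith [ht.2], by linarith [ht.2]⟩
  have hglt : g ((t + Δt)/2) < f ((t + Δt)/2) := by
    have h1 := harg _ (hℓmem _ (Ioo_subset_Icc_self hm))
    have h2 := harg _ (hrange _ (hsub (Ioo_subset_Icc_self hm)))
    exact Real.strictMonoOn_sin h1 h2 (by linarith [hchord _ hm])
  have hglt' : (∫ s in t..Δt, g s) < ∫ s in t..Δt, f s :=
    integral_lt_integral_of_continuousOn_of_le_of_exists_lt ht.2 hgc hfc
      (fun s hs => hgle s (Ioc_subset_Icc_self hs))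
      ⟨(t + Δt)/2, Ioo_subset_Icc_self hm, hglt⟩
  -- compute ∫ g
  have hganti : ∀ s ∈ Set.uIcc t Δt,
      HasDerivAt (fun u => -(1/k) * Real.cos (θ t - φ + (u - t) * k)) (g s) s := by
    intro s _
    have h1 : HasDerivAt (fun u : ℝ => θ t - φ + (u - t) * k) k s := by
      have := ((hasDerivAt_id s).sub_const t).const_mul k
      simpa [mul_comm] using (this.const_add (θ t - φ))
    have h2 := (h1.cos).const_mul (-(1/k))
    refine h2.congr_deriv ?_
    simp only [hg, hℓ]
    field_simp
    ring_nf
  have hgint : (∫ s in t..Δt, g s) = (1/k) * (Real.cos (θ t - φ) - Real.cos (θq - φ)) := by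
    rw [intervalIntegral.integral_eq_sub_of_hasDerivAt hganti
      (hgc.intervalIntegrable_of_Icc ht.2.le)]
    have hDt : (Δt - t) * k = c := by rw [hk]; field_simp; rw [hL]
    have : θ t - φ + (Δt - t) * k = θq - φ := by rw [hDt, hc]; ring
    rw [this]
    ring
  -- ∫ g ≥ 0
  have hcosge : Real.cos (π/6) ≤ Real.cos (θ t - φ) := by
    have h1 : |θ t - φ| ≤ π/6 := by
      rw [abs_le]; constructor <;> simp only [hφ] <;> nlinarith [hθt0, hθtq]
    calc Real.cos (π/6) ≤ Real.cos |θ t - φ| := by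
          apply Real.cos_le_cos_of_nonneg_of_le_pi (abs_nonneg _) (by linarith) h1
      _ = Real.cos (θ t - φ) := Real.cos_abs _
  have hgnonneg : 0 ≤ ∫ s in t..Δt, g s := by
    rw [hgint]
    have : Real.cos (θq - φ) = Real.cos (π/6) := by rw [hφ]; ring_nf
    rw [this]
    have := one_div_pos.2 hkpos
    nlinarith
  have hfpos : 0 < ∫ s in t..Δt, f s := lt_of_le_of_lt hgnonneg hglt'
  -- relate f to sin θ - tan φ cos θ
  have hcosφ : 0 < Real.cos φ := by
    apply Real.cos_pos_of_mem_Ioo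
    constructor <;> simp only [hφ] <;> nlinarith
  have hsinθc : ContinuousOn (fun s => Real.sin (θ s)) (Set.Icc 0 Δt) :=
    Real.continuous_sin.comp_continuousOn hθc
  have hcosθc : ContinuousOn (fun s => Real.cos (θ s)) (Set.Icc 0 Δt) :=
    Real.continuous_cos.comp_continuousOn hθc
  have hsi : IntervalIntegrable (fun s => Real.sin (θ s)) MeasureTheory.volume t Δt :=
    (hsinθc.mono hsub).intervalIntegrable_of_Icc ht.2.le
  have hci : IntervalIntegrable (fun s => Real.cos (θ s)) MeasureTheory.volume t Δt :=
    (hcosθc.mono hsub).intervalIntegrable_of_Icc ht.2.le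
  have hydiff : y Δt - y t = ∫ s in t..Δt, Real.sin (θ s) := by
    rw [hy, hy]
    apply intervalIntegral.integral_interval_sub_left
    · exact hsinθc.intervalIntegrable_of_Icc hΔt.le
    · exact (hsinθc.mono (Icc_subset_Icc le_rfl ht.2.le)).intervalIntegrable_of_Icc ht.1
  have hxdiff : x Δt - x t = ∫ s in t..Δt, Real.cos (θ s) := by
    rw [hx, hx]
    apply intervalIntegral.integral_interval_sub_left
    · exact hcosθc.intervalIntegrable_of_Icc hΔt.le
    · exact (hcosθc.mono (Icc_subset_Icc le_rfl ht.2.le)).intervalIntegrable_of_Icc ht.1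
  have hkey : (∫ s in t..Δt, f s) =
      Real.cos φ * ((y Δt - y t) - Real.tan φ * (x Δt - x t)) := by
    have hcongr : Set.EqOn f
        (fun s => Real.cos φ * (Real.sin (θ s) - Real.tan φ * Real.cos (θ s)))
        (Set.uIcc t Δt) := by
      intro s _
      simp only [hf, Real.sin_sub, Real.tan_eq_sin_div_cos]
      field_simp
    rw [intervalIntegral.integral_congr hcongr, intervalIntegral.integral_const_mul,
      intervalIntegral.integral_sub hsi (hci.const_mul _),
      intervalIntegral.integral_const_mul, hydiff, hxdiff]
  rw [hkey] at hfpos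
  have hpos : 0 < (y Δt - y t) - Real.tan φ * (x Δt - x t) := by
    by_contra hcon
    push_neg at hcon
    have : Real.cos φ * ((y Δt - y t) - Real.tan φ * (x Δt - x t)) ≤ 0 :=
      mul_nonpos_of_nonneg_of_nonpos hcosφ.le hcon
    linarith
  have hrw : Real.tan φ * (x t - x Δt) = -(Real.tan φ * (x Δt - x t)) := by ring
  show y t < y Δt + Real.tan φ * (x t - x Δt)
  linarith [hpos, hrw]
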